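/- arXiv:2106.02614 — 3 statements merged into one kernel-verified Lean document; each statement's English description precedes it below -/
import Mathlib

section
/- Let ω be a random vector in ℝ^d with distribution Λ whose Fourier transform gives the kernel κ (i.e., κ(u) = E[cos(ωᵀu)]), and let ξ ∼ U([0,2π)) be independent of ω. Then for any x, y ∈ ℝ^d, E[cos²(ωᵀx + ξ)·cos²(ωᵀy + ξ)] = 1/4 + (1/8)·κ(2x − 2y). -/
open MeasureTheory ProbabilityTheory Real

/-- The uniform distribution on `[0, 2π)`. -/
noncomputable def uniformPhase : Measure ℝ :=
  (ENNReal.ofReal (2 * Real.pi))⁻¹ • (volume.restrict (Set.Ico 0 (2 * Real.pi)))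

lemma phase_cos_int (k : ℝ) (hk : k ≠ 0) (h0 : Real.sin (k * (2 * π)) = 0) :
    ∫ u, Real.cos (k * u) ∂uniformPhase = 0 := by
  rw [uniformPhase, integral_smul_measure, MeasureTheory.integral_Ico_eq_integral_Ioo,
    ← MeasureTheory.integral_Ioc_eq_integral_Ioo,
    ← intervalIntegral.integral_of_le (by positivity : (0:ℝ) ≤ 2 * π),
    intervalIntegral.integral_comp_mul_left (fun u => Real.cos u) hk]
  simp [integral_cos, h0]

lemma phase_sin_int (k : ℝ) (hk : k ≠ 0) (h0 : Real.cos (k * (2 * π)) = 1) :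
    ∫ u, Real.sin (k * u) ∂uniformPhase = 0 := by
  rw [uniformPhase, integral_smul_measure, MeasureTheory.integral_Ico_eq_integral_Ioo,
    ← MeasureTheory.integral_Ioc_eq_integral_Ioo,
    ← intervalIntegral.integral_of_le (by positivity : (0:ℝ) ≤ 2 * π),
    intervalIntegral.integral_comp_mul_left (fun u => Real.sin u) hk]
  simp [integral_sin, h0]

lemma integrable_cos_comp {Ω : Type*} [MeasureSpace Ω] [IsProbabilityMeasure (ℙ : Measure Ω)]
    {f : Ω → ℝ} (hf : Measurable f) : Integrable (fun a => Real.cos (f a)) ℙ :=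
  (integrable_const (1:ℝ)).mono' (hf.cos.aestronglyMeasurable)
    (Filter.Eventually.of_forall fun a => by simpa using Real.abs_cos_le_one (f a))

lemma integrable_sin_comp {Ω : Type*} [MeasureSpace Ω] [IsProbabilityMeasure (ℙ : Measure Ω)]
    {f : Ω → ℝ} (hf : Measurable f) : Integrable (fun a => Real.sin (f a)) ℙ :=
  (integrable_const (1:ℝ)).mono' (hf.sin.aestronglyMeasurable)
    (Filter.Eventually.of_forall fun a => by simpa using Real.abs_sin_le_one (f a))

lemma integrable_bdd {Ω : Type*} [MeasureSpace Ω] [IsProbabilityMeasure (ℙ : Measure Ω)]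
    {f : Ω → ℝ} (hf : Measurable f) (C : ℝ) (h : ∀ a, |f a| ≤ C) : Integrable f ℙ :=
  (integrable_const C).mono' hf.aestronglyMeasurable (Filter.Eventually.of_forall h)

lemma zero_expect {Ω : Type*} [MeasureSpace Ω] [IsProbabilityMeasure (ℙ : Measure Ω)]
    {d : ℕ} (ω : Ω → (Fin d → ℝ)) (ξ : Ω → ℝ)
    (hωmeas : Measurable ω) (hξmeas : Measurable ξ)
    (hξdist : Measure.map ξ ℙ = uniformPhase)
    (hindep : IndepFun ω ξ ℙ)
    (f : (Fin d → ℝ) → ℝ) (hf : Measurable f) (k : ℝ) (hk : k ≠ 0)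
    (hs : Real.sin (k * (2 * π)) = 0) (hc : Real.cos (k * (2 * π)) = 1) :
    ∫ a, Real.cos (f (ω a) + k * ξ a) ∂ℙ = 0 := by
  have hmc : Measurable fun u : ℝ => Real.cos (k * u) :=
    measurable_cos.comp (measurable_const_mul k)
  have hms : Measurable fun u : ℝ => Real.sin (k * u) :=
    measurable_sin.comp (measurable_const_mul k)
  have hξc : ∫ a, Real.cos (k * ξ a) ∂ℙ = 0 := by
    have := integral_map (μ := ℙ) hξmeas.aemeasurable
      (f := fun u : ℝ => Real.cos (k * u)) hmc.aestronglyMeasurable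
    rw [hξdist] at this
    rw [← this]; exact phase_cos_int k hk hs
  have hξs : ∫ a, Real.sin (k * ξ a) ∂ℙ = 0 := by
    have := integral_map (μ := ℙ) hξmeas.aemeasurable
      (f := fun u : ℝ => Real.sin (k * u)) hms.aestronglyMeasurable
    rw [hξdist] at this
    rw [← this]; exact phase_sin_int k hk hc
  have h1 : ∫ a, Real.cos (f (ω a)) * Real.cos (k * ξ a) ∂ℙ
      = (∫ a, Real.cos (f (ω a)) ∂ℙ) * ∫ a, Real.cos (k * ξ a) ∂ℙ := by
    have h := (hindep.comp hf.cos hmc).integral_mul_eq_mul_integral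
      ((hf.comp hωmeas).cos.aestronglyMeasurable)
      ((hmc.comp hξmeas).aestronglyMeasurable)
    simpa [Function.comp_def] using h
  have h2 : ∫ a, Real.sin (f (ω a)) * Real.sin (k * ξ a) ∂ℙ
      = (∫ a, Real.sin (f (ω a)) ∂ℙ) * ∫ a, Real.sin (k * ξ a) ∂ℙ := by
    have h := (hindep.comp hf.sin hms).integral_mul_eq_mul_integral
      ((hf.comp hωmeas).sin.aestronglyMeasurable)
      ((hms.comp hξmeas).aestronglyMeasurable)
    simpa [Function.comp_def] using h
  have heq : ∀ a, Real.cos (f (ω a) + k * ξ a)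
      = Real.cos (f (ω a)) * Real.cos (k * ξ a) - Real.sin (f (ω a)) * Real.sin (k * ξ a) :=
    fun a => Real.cos_add _ _
  rw [integral_congr_ae (Filter.Eventually.of_forall heq), integral_sub, h1, h2, hξc, hξs]
  · ring
  · exact integrable_bdd ((hf.comp hωmeas).cos.mul (hmc.comp hξmeas)) 1 fun a => by
      rw [abs_mul]
      exact mul_le_one₀ (Real.abs_cos_le_one _) (abs_nonneg _) (Real.abs_cos_le_one _)
  · exact integrable_bdd ((hf.comp hωmeas).sin.mul (hms.comp hξmeas)) 1 fun a => by
      rw [abs_mul]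
      exact mul_le_one₀ (Real.abs_sin_le_one _) (abs_nonneg _) (Real.abs_sin_le_one _)

set_option maxHeartbeats 2000000 in
theorem stmt_1
    {Ω : Type*} [MeasureSpace Ω] [IsProbabilityMeasure (ℙ : Measure Ω)]
    {d : ℕ} (ω : Ω → (Fin d → ℝ)) (ξ : Ω → ℝ)
    (hωmeas : Measurable ω) (hξmeas : Measurable ξ)
    (hξdist : Measure.map ξ ℙ = uniformPhase)
    (hindep : IndepFun ω ξ ℙ)
    (κ : (Fin d → ℝ) → ℝ)
    (hκ : ∀ u : Fin d → ℝ, κ u = ∫ a, Real.cos (∑ i, ω a i * u i) ∂ℙ)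
    (x y : Fin d → ℝ) :
    ∫ a, (Real.cos ((∑ i, ω a i * x i) + ξ a)) ^ 2 * (Real.cos ((∑ i, ω a i * y i) + ξ a)) ^ 2 ∂ℙ
      = 1 / 4 + (1 / 8) * κ (2 • x - 2 • y) := by
  set s : Ω → ℝ := fun a => ∑ i, ω a i * x i with hs_def
  set t : Ω → ℝ := fun a => ∑ i, ω a i * y i with ht_def
  have hsmeas : Measurable fun w : Fin d → ℝ => ∑ i, w i * x i :=
    Finset.measurable_sum _ fun i _ => (measurable_pi_apply i).mul_const _
  have htmeas : Measurable fun w : Fin d → ℝ => ∑ i, w i * y i :=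
    Finset.measurable_sum _ fun i _ => (measurable_pi_apply i).mul_const _
  have hS : Measurable s := hsmeas.comp hωmeas
  have hT : Measurable t := htmeas.comp hωmeas
  -- pointwise trig identity
  have trig : ∀ A B : ℝ, Real.cos A ^ 2 * Real.cos B ^ 2
      = 1/4 + (1/4) * Real.cos (2*A) + (1/4) * Real.cos (2*B)
        + (1/8) * Real.cos (2*A - 2*B) + (1/8) * Real.cos (2*A + 2*B) := by
    intro A B
    have hprod : Real.cos (2*A) * Real.cos (2*B)
        = (Real.cos (2*A - 2*B) + Real.cos (2*A + 2*B)) / 2 := by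
      rw [Real.cos_sub, Real.cos_add]; ring
    rw [Real.cos_sq, Real.cos_sq]
    linear_combination hprod / 4
  have key : ∀ a, Real.cos (s a + ξ a) ^ 2 * Real.cos (t a + ξ a) ^ 2
      = 1/4 + (1/4) * Real.cos (2 * s a + 2 * ξ a) + (1/4) * Real.cos (2 * t a + 2 * ξ a)
        + (1/8) * Real.cos (2 * s a - 2 * t a)
        + (1/8) * Real.cos ((2 * s a + 2 * t a) + 4 * ξ a) := by
    intro a
    have h := trig (s a + ξ a) (t a + ξ a)
    rw [show 2*(s a + ξ a) = 2 * s a + 2 * ξ a by ring] at h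
    rw [show 2*(t a + ξ a) = 2 * t a + 2 * ξ a by ring] at h
    rw [show 2 * s a + 2 * ξ a - (2 * t a + 2 * ξ a) = 2 * s a - 2 * t a by ring] at h
    rw [show 2 * s a + 2 * ξ a + (2 * t a + 2 * ξ a) = (2 * s a + 2 * t a) + 4 * ξ a by ring] at h
    exact h
  -- trig facts
  have sin4 : Real.sin ((2:ℝ) * (2 * π)) = 0 := by
    rw [show (2:ℝ) * (2*π) = (4:ℕ) * π by push_cast; ring, Real.sin_nat_mul_pi]
  have cos4 : Real.cos ((2:ℝ) * (2 * π)) = 1 := by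
    rw [show (2:ℝ) * (2*π) = (2:ℕ) * (2*π) by push_cast; ring, Real.cos_nat_mul_two_pi]
  have sin8 : Real.sin ((4:ℝ) * (2 * π)) = 0 := by
    rw [show (4:ℝ) * (2*π) = (8:ℕ) * π by push_cast; ring, Real.sin_nat_mul_pi]
  have cos8 : Real.cos ((4:ℝ) * (2 * π)) = 1 := by
    rw [show (4:ℝ) * (2*π) = (4:ℕ) * (2*π) by push_cast; ring, Real.cos_nat_mul_two_pi]
  -- the three vanishing expectations
  have Z1 : ∫ a, Real.cos (2 * s a + 2 * ξ a) ∂ℙ = 0 :=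
    zero_expect ω ξ hωmeas hξmeas hξdist hindep
      (fun w => 2 * ∑ i, w i * x i) (hsmeas.const_mul 2) 2 two_ne_zero sin4 cos4
  have Z2 : ∫ a, Real.cos (2 * t a + 2 * ξ a) ∂ℙ = 0 :=
    zero_expect ω ξ hωmeas hξmeas hξdist hindep
      (fun w => 2 * ∑ i, w i * y i) (htmeas.const_mul 2) 2 two_ne_zero sin4 cos4
  have Z3 : ∫ a, Real.cos ((2 * s a + 2 * t a) + 4 * ξ a) ∂ℙ = 0 :=
    zero_expect ω ξ hωmeas hξmeas hξdist hindep
      (fun w => 2 * ∑ i, w i * x i + 2 * ∑ i, w i * y i)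
      ((hsmeas.const_mul 2).add (htmeas.const_mul 2)) 4 four_ne_zero sin8 cos8
  -- the kernel term
  have harg : ∀ a, (2:ℝ) * s a - 2 * t a = ∑ i, ω a i * ((2 • x - 2 • y) i) := by
    intro a
    show (2:ℝ) * (∑ i, ω a i * x i) - 2 * (∑ i, ω a i * y i) = _
    rw [Finset.mul_sum, Finset.mul_sum, ← Finset.sum_sub_distrib]
    exact Finset.sum_congr rfl fun i _ => by
      simp only [Pi.sub_apply, Pi.smul_apply, smul_eq_mul]; ring
  have hK : ∫ a, Real.cos (2 * s a - 2 * t a) ∂ℙ = κ (2 • x - 2 • y) := by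
    rw [hκ (2 • x - 2 • y)]
    exact integral_congr_ae (Filter.Eventually.of_forall fun a => congrArg Real.cos (harg a))
  -- integrability
  have i1 : Integrable (fun a => (1/4) * Real.cos (2 * s a + 2 * ξ a)) ℙ :=
    (integrable_cos_comp ((hS.const_mul 2).add (hξmeas.const_mul 2))).const_mul _
  have i2 : Integrable (fun a => (1/4) * Real.cos (2 * t a + 2 * ξ a)) ℙ :=
    (integrable_cos_comp ((hT.const_mul 2).add (hξmeas.const_mul 2))).const_mul _
  have i3 : Integrable (fun a => (1/8) * Real.cos (2 * s a - 2 * t a)) ℙ :=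
    (integrable_cos_comp ((hS.const_mul 2).sub (hT.const_mul 2))).const_mul _
  have i4 : Integrable (fun a => (1/8) * Real.cos ((2 * s a + 2 * t a) + 4 * ξ a)) ℙ :=
    (integrable_cos_comp (((hS.const_mul 2).add (hT.const_mul 2)).add (hξmeas.const_mul 4))).const_mul _
  have i0 : Integrable (fun _ : Ω => (1:ℝ)/4) ℙ := integrable_const _
  calc ∫ a, Real.cos (s a + ξ a) ^ 2 * Real.cos (t a + ξ a) ^ 2 ∂ℙ
      = ∫ a, (1/4 + (1/4) * Real.cos (2 * s a + 2 * ξ a) + (1/4) * Real.cos (2 * t a + 2 * ξ a)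
          + (1/8) * Real.cos (2 * s a - 2 * t a)
          + (1/8) * Real.cos ((2 * s a + 2 * t a) + 4 * ξ a)) ∂ℙ :=
        integral_congr_ae (Filter.Eventually.of_forall key)
    _ = 1 / 4 + (1 / 8) * κ (2 • x - 2 • y) := by
        have j1 : Integrable (fun a => (1:ℝ)/4 + (1/4) * Real.cos (2 * s a + 2 * ξ a)) ℙ :=
          i0.add i1
        have j2 : Integrable (fun a => (1:ℝ)/4 + (1/4) * Real.cos (2 * s a + 2 * ξ a)
            + (1/4) * Real.cos (2 * t a + 2 * ξ a)) ℙ := j1.add i2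
        have j3 : Integrable (fun a => (1:ℝ)/4 + (1/4) * Real.cos (2 * s a + 2 * ξ a)
            + (1/4) * Real.cos (2 * t a + 2 * ξ a)
            + (1/8) * Real.cos (2 * s a - 2 * t a)) ℙ := j2.add i3
        rw [integral_add j3 i4, integral_add j2 i3, integral_add j1 i2,
          integral_add i0 i1, integral_const_mul, integral_const_mul,
          integral_const_mul, integral_const_mul, Z1, Z2, Z3, hK]
        simp
end

section
/- Let V_β = I_p ⊗ v_β and H = I_p ⊗ H_β with v_β = (β^{−1},…,β^{−λ}) and H_β lower bidiagonal (diagonal 1, subdiagonal −β), and let m = λp. Suppose u_x, u_y ∈ ℝ^m satisfy ‖u_x‖_∞ ≤ c and ‖u_y‖_∞ ≤ c. Let Ṽ_β = (√2/(√p‖v_β‖₂)) V_β. Then |⟨Ṽ_β H u_x, Ṽ_β H u_y⟩| ≤ 2c²/β^{2λ−2}. -/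
/-- Bound on the quantization-noise cross term for the distributed noise-shaping
condensation operator: `|⟨Ṽ_β H u_x, Ṽ_β H u_y⟩| ≤ 2c²/β^{2λ−2}`. -/
theorem stmt_8 (p lam : ℕ) (hp : 0 < p) (hlam : 0 < lam)
    (β : ℝ) (hβ1 : 1 < β) (hβ2 : β < 2)
    (C : ℝ) (ux uy : Fin p × Fin lam → ℝ)
    (hux : ∀ c, |ux c| ≤ C) (huy : ∀ c, |uy c| ≤ C) :
    (let vβ : Fin lam → ℝ := fun j => β ^ (-(((j : ℕ) : ℤ) + 1))
     let Hβ : Matrix (Fin lam) (Fin lam) ℝ :=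
       fun i j => if i = j then 1 else if (i : ℕ) = (j : ℕ) + 1 then -β else 0
     -- H = I_p ⊗ H_β
     let H : Matrix (Fin p × Fin lam) (Fin p × Fin lam) ℝ :=
       fun a b => if a.1 = b.1 then Hβ a.2 b.2 else 0
     let nv : ℝ := Real.sqrt (∑ j, (vβ j) ^ 2)
     -- Ṽ_β = (√2/(√p ‖v_β‖₂)) (I_p ⊗ v_β)
     let Vt : Fin p → (Fin p × Fin lam) → ℝ :=
       fun i c => (Real.sqrt 2 / (Real.sqrt p * nv)) * (if c.1 = i then vβ c.2 else 0)
     |∑ i : Fin p, (∑ c, Vt i c * H.mulVec ux c) * (∑ c, Vt i c * H.mulVec uy c)|)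
      ≤ 2 * C ^ 2 / β ^ (2 * lam - 2) := by
  lift_lets
  extract_lets vβ Hβ H nv Vt
  have hβ0 : (0:ℝ) < β := lt_trans one_pos hβ1
  have hβne : β ≠ 0 := ne_of_gt hβ0
  have hC : 0 ≤ C := le_trans (abs_nonneg _) (hux (⟨0, hp⟩, ⟨0, hlam⟩))
  set s : ℝ := Real.sqrt 2 / (Real.sqrt p * nv) with hs
  set L : Fin lam := ⟨lam - 1, by omega⟩ with hL
  -- key column sum
  have key : ∀ j' : Fin lam, (∑ j, vβ j * Hβ j j') = if j' = L then β ^ (-(lam:ℤ)) else 0 := by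
    intro j'
    have expand : ∀ j : Fin lam, vβ j * Hβ j j' =
        (if j = j' then vβ j' else 0) + (if (j:ℕ) = (j':ℕ) + 1 then -β * vβ j else 0) := by
      intro j
      simp only [Hβ]
      by_cases h1 : j = j'
      · subst h1
        simp [Nat.succ_ne_self]
      · have h2 : ¬ ((j:ℕ) = (j':ℕ)) := fun h => h1 (Fin.ext h)
        simp only [if_neg h1]
        by_cases h3 : (j:ℕ) = (j':ℕ) + 1 <;> simp [h3] <;> ring
    rw [Finset.sum_congr rfl (fun j _ => expand j), Finset.sum_add_distrib]
    rw [Finset.sum_ite_eq' Finset.univ j' (fun _ => vβ j'), if_pos (Finset.mem_univ _)]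
    by_cases h : (j':ℕ) + 1 < lam
    · have hcond : ∀ j : Fin lam, ((j:ℕ) = (j':ℕ) + 1) ↔ j = ⟨(j':ℕ)+1, h⟩ := by
        intro j; constructor
        · intro hj; exact Fin.ext hj
        · intro hj; rw [hj]
      rw [Finset.sum_congr rfl (fun j _ => by rw [if_congr (hcond j) rfl rfl])]
      rw [Finset.sum_ite_eq' Finset.univ (⟨(j':ℕ)+1, h⟩ : Fin lam)
        (fun j => -β * vβ j), if_pos (Finset.mem_univ _)]
      have hjL : j' ≠ L := by
        intro he; apply absurd h; rw [he]; simp only [hL]; omega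
      rw [if_neg hjL]
      simp only [vβ]
      have e1 : (-((((j':ℕ) + 1 : ℕ) : ℤ) + 1)) = (-(((j':ℕ):ℤ)+1)) + (-1) := by
        push_cast; ring
      rw [e1, zpow_add₀ hβne, zpow_neg_one]
      field_simp
      ring
    · have hj'L : j' = L := Fin.ext (by simp only [hL]; omega)
      have hz : ∀ j : Fin lam, (if (j:ℕ) = (j':ℕ) + 1 then -β * vβ j else 0) = 0 := by
        intro j
        rw [if_neg]
        intro hj
        exact h (hj ▸ j.isLt)
      rw [Finset.sum_congr rfl (fun j _ => hz j), Finset.sum_const_zero, add_zero,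
        if_pos hj'L]
      simp only [vβ, hj'L, hL]
      congr 1
      push_cast
      omega
  set B : ℝ := β ^ (-(lam:ℤ)) with hB
  have inner : ∀ (u : Fin p × Fin lam → ℝ) (i : Fin p),
      (∑ c, Vt i c * H.mulVec u c) = s * (B * u (i, L)) := by
    intro u i
    have hmul : ∀ b : Fin lam, H.mulVec u (i, b) = ∑ b', Hβ b b' * u (i, b') := by
      intro b
      simp only [Matrix.mulVec, dotProduct, H, Fintype.sum_prod_type]
      rw [Finset.sum_eq_single i]
      · simp
      · intro a' _ ha'
        apply Finset.sum_eq_zero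
        intro b' _
        simp [Ne.symm ha']
      · intro hi; exact absurd (Finset.mem_univ i) hi
    rw [Fintype.sum_prod_type]
    rw [Finset.sum_eq_single i]
    · have hterm : ∀ b : Fin lam, Vt i (i, b) * H.mulVec u (i, b)
          = s * (vβ b * ∑ b', Hβ b b' * u (i, b')) := by
        intro b
        have hv : Vt i (i, b) = s * vβ b := by simp [Vt, hs]
        rw [hv, hmul b]; ring
      rw [Finset.sum_congr rfl (fun b _ => hterm b)]
      have swap : ∑ b, s * (vβ b * (∑ b', Hβ b b' * u (i, b')))
          = s * ∑ b', (∑ b, vβ b * Hβ b b') * u (i, b') := by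
        simp_rw [Finset.mul_sum, Finset.sum_mul, Finset.mul_sum]
        rw [Finset.sum_comm]
        apply Finset.sum_congr rfl
        intro b _
        apply Finset.sum_congr rfl
        intro b' _
        ring
      rw [swap]
      congr 1
      rw [Finset.sum_congr rfl (fun b' _ => by rw [key b'])]
      rw [Finset.sum_congr rfl (fun b' (_ : b' ∈ Finset.univ) =>
        ite_mul (b' = L) B 0 (u (i, b')))]
      simp only [zero_mul]
      rw [Finset.sum_ite_eq' Finset.univ L (fun b' => B * u (i, b')),
        if_pos (Finset.mem_univ _)]
    · intro a _ ha
      apply Finset.sum_eq_zero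
      intro b _
      simp [Vt, ha]
    · intro hi; exact absurd (Finset.mem_univ i) hi
  rw [Finset.sum_congr rfl (fun i _ => by rw [inner ux i, inner uy i])]
  -- numeric bounds
  have hp' : (0:ℝ) < p := Nat.cast_pos.2 hp
  have hsum_nonneg : ∀ j ∈ (Finset.univ : Finset (Fin lam)), (0:ℝ) ≤ vβ j ^ 2 :=
    fun j _ => sq_nonneg _
  have hnv2 : nv ^ 2 = ∑ j, vβ j ^ 2 :=
    Real.sq_sqrt (Finset.sum_nonneg hsum_nonneg)
  have hterm0 : (β ^ (-2:ℤ)) = vβ (⟨0, hlam⟩ : Fin lam) ^ 2 := by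
    simp only [vβ]
    rw [← zpow_natCast (β ^ _) 2, ← zpow_mul]
    norm_num
  have hnv2ge : β ^ (-2:ℤ) ≤ nv ^ 2 := by
    rw [hnv2, hterm0]
    exact Finset.single_le_sum hsum_nonneg (Finset.mem_univ _)
  have hnv2pos : 0 < nv ^ 2 := lt_of_lt_of_le (zpow_pos hβ0 _) hnv2ge
  have hs2 : s ^ 2 = 2 / ((p:ℝ) * nv ^ 2) := by
    rw [hs, div_pow, mul_pow, Real.sq_sqrt (by norm_num : (0:ℝ) ≤ 2),
      Real.sq_sqrt (le_of_lt hp')]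
  have hbd : ∀ i : Fin p, |(s * (B * ux (i, L))) * (s * (B * uy (i, L)))|
      ≤ s ^ 2 * B ^ 2 * C ^ 2 := by
    intro i
    have e : |(s * (B * ux (i, L))) * (s * (B * uy (i, L)))|
        = (|s| ^ 2 * |B| ^ 2) * (|ux (i, L)| * |uy (i, L)|) := by
      simp only [abs_mul]
      ring
    rw [e, sq_abs, sq_abs]
    have h1 : |ux (i, L)| * |uy (i, L)| ≤ C ^ 2 := by
      rw [sq]
      exact mul_le_mul (hux _) (huy _) (abs_nonneg _) hC
    exact mul_le_mul_of_nonneg_left h1 (mul_nonneg (sq_nonneg _) (sq_nonneg _))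
  have habs : |∑ i : Fin p, (s * (B * ux (i, L))) * (s * (B * uy (i, L)))|
      ≤ (p:ℝ) * (s ^ 2 * B ^ 2 * C ^ 2) := by
    refine le_trans (Finset.abs_sum_le_sum_abs _ _) ?_
    refine le_trans (Finset.sum_le_sum (fun i _ => hbd i)) ?_
    rw [Finset.sum_const, Finset.card_univ, Fintype.card_fin, nsmul_eq_mul]
  refine le_trans habs ?_
  have hBsq : B ^ 2 = β ^ (-(2 * lam : ℤ)) := by
    rw [hB, ← zpow_natCast (β ^ _) 2, ← zpow_mul]
    congr 1
    ring
  have hpow : (β:ℝ) ^ (2 * lam - 2 : ℕ) = β ^ ((2 * lam : ℤ) - 2) := by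
    rw [← zpow_natCast]
    congr 1
    omega
  rw [hs2, hBsq, hpow]
  have lhs_eq : (p:ℝ) * (2 / ((p:ℝ) * nv ^ 2) * β ^ (-(2 * lam : ℤ)) * C ^ 2)
      = 2 * C ^ 2 * β ^ (-(2 * lam : ℤ)) / nv ^ 2 := by
    field_simp
  rw [lhs_eq, div_le_div_iff₀ hnv2pos (zpow_pos hβ0 _)]
  have hzz : β ^ (-(2 * lam : ℤ)) * β ^ ((2 * lam : ℤ) - 2) = β ^ (-2:ℤ) := by
    rw [← zpow_add₀ hβne]
    congr 1
    ring
  calc 2 * C ^ 2 * β ^ (-(2 * lam : ℤ)) * β ^ ((2 * lam : ℤ) - 2)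
      = 2 * C ^ 2 * β ^ (-2:ℤ) := by rw [mul_assoc, hzz]
    _ ≤ 2 * C ^ 2 * nv ^ 2 := by
        apply mul_le_mul_of_nonneg_left hnv2ge
        positivity
end

section
/- Let r ∈ ℕ, and let V_{ΣΔ} = I_p ⊗ v be the r-th order Sigma-Delta condensation operator with v the coefficient vector of (1 + z + … + z^{λ̃−1})^r, and D ∈ ℝ^{m×m} the first-order difference matrix (1 on diagonal, −1 on first subdiagonal). If ‖u_x‖_∞, ‖u_y‖_∞ ≤ c(K,r), then with Ṽ_{ΣΔ} = (√2/(√p‖v‖₂)) V_{ΣΔ}, there is a constant c'(r) depending only on r such that |⟨Ṽ_{ΣΔ} D^r u_x, Ṽ_{ΣΔ} D^r u_y⟩| ≤ c(K,r)² c'(r)/λ^{2r−1}. -/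
open Polynomial Finset

namespace SDAux

lemma coeff_G (lt b : ℕ) : ((∑ t ∈ range lt, (X:ℝ[X])^t)).coeff b = if b < lt then 1 else 0 := by
  rw [finset_sum_coeff]
  simp only [coeff_X_pow]
  rw [Finset.sum_ite_eq (range lt) b (fun _ => (1:ℝ))]
  simp

lemma coeff_G_pow (lt s j : ℕ) :
    0 ≤ ((∑ t ∈ range lt, (X:ℝ[X])^t)^s).coeff j ∧
      ((∑ t ∈ range lt, (X:ℝ[X])^t)^s).coeff j ≤ 2^(j+s) := by
  induction s generalizing j with
  | zero =>
    simp only [pow_zero, coeff_one]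
    constructor
    · positivity
    · split <;> [skip; positivity]
      exact one_le_pow₀ (by norm_num)
  | succ s ih =>
    rw [pow_succ, coeff_mul, Finset.Nat.sum_antidiagonal_eq_sum_range_succ_mk]
    constructor
    · apply Finset.sum_nonneg
      intro k hk
      have := (ih k).1
      rw [coeff_G]
      split <;> simp [this]
    · calc ∑ k ∈ range (j+1), ((∑ t ∈ range lt, (X:ℝ[X])^t)^s).coeff k *
            (∑ t ∈ range lt, (X:ℝ[X])^t).coeff (j - k)
          ≤ ∑ k ∈ range (j+1), 2^(k+s) := by
            apply Finset.sum_le_sum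
            intro k hk
            rw [coeff_G]
            split
            · simpa using (ih k).2
            · simp [(ih k).1]
        _ = (∑ k ∈ range (j+1), (2:ℝ)^k) * 2^s := by rw [Finset.sum_mul]; congr 1; ext k; rw [pow_add]
        _ ≤ 2^(j+1) * 2^s := by
            gcongr
            rw [geom_sum_eq (by norm_num)]
            norm_num
        _ = 2^(j+(s+1)) := by ring

lemma coeff_term (a : ℝ) (e k : ℕ) : ((C a) * X^e : ℝ[X]).coeff k = if k = e then a else 0 := by
  simp [coeff_C_mul, coeff_X_pow, mul_ite]

lemma term_eq (m r c e : ℕ) : ((-1:ℝ[X])^(m+r) * X^e * 1^(r-m) * (c:ℝ[X]))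
    = C ((-1)^(m+r) * (c:ℝ)) * X^e := by
  rw [map_mul, map_pow, C_neg, C_1, ← C_eq_natCast]
  ring

lemma coeff_Q_bound (lt r n' : ℕ) :
    |(((X:ℝ[X])^lt - 1)^r).coeff n'| ≤
      ∑ m ∈ range (r+1), (if n' = lt*m then (r.choose m : ℝ) else 0) := by
  rw [sub_pow, finset_sum_coeff]
  calc |∑ m ∈ range (r+1), ((-1:ℝ[X])^(m+r) * ((X:ℝ[X])^lt)^m * 1^(r-m) * (r.choose m : ℝ[X])).coeff n'|
      ≤ ∑ m ∈ range (r+1), |((-1:ℝ[X])^(m+r) * ((X:ℝ[X])^lt)^m * 1^(r-m) * (r.choose m : ℝ[X])).coeff n'| :=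
        Finset.abs_sum_le_sum_abs _ _
    _ ≤ _ := by
        apply Finset.sum_le_sum
        intro m hm
        rw [← pow_mul, term_eq, coeff_term]
        split
        · rw [abs_mul, abs_pow, abs_neg, abs_one, one_pow, one_mul, Nat.abs_cast]
        · simp

lemma l1_Q (lt r N : ℕ) :
    ∑ n' ∈ range N, |(((X:ℝ[X])^lt - 1)^r).coeff n'| ≤ 2^r := by
  calc ∑ n' ∈ range N, |(((X:ℝ[X])^lt - 1)^r).coeff n'|
      ≤ ∑ n' ∈ range N, ∑ m ∈ range (r+1), (if n' = lt*m then (r.choose m : ℝ) else 0) :=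
        Finset.sum_le_sum fun n' _ => coeff_Q_bound lt r n'
    _ = ∑ m ∈ range (r+1), ∑ n' ∈ range N, (if n' = lt*m then (r.choose m : ℝ) else 0) :=
        Finset.sum_comm
    _ ≤ ∑ m ∈ range (r+1), (r.choose m : ℝ) := by
        apply Finset.sum_le_sum
        intro m hm
        rw [Finset.sum_ite_eq' (range N) (lt*m) (fun _ => (r.choose m : ℝ))]
        split <;> simp
    _ = 2^r := by
        rw [← Nat.cast_sum, Nat.sum_range_choose]
        norm_num
lemma coeff_X_sub_one (r k : ℕ) :
    ((X - 1 : ℝ[X])^r).coeff k = if k ≤ r then (-1:ℝ)^(k+r) * r.choose k else 0 := by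
  rw [sub_pow, finset_sum_coeff]
  have h : ∀ m ∈ range (r+1), ((-1:ℝ[X])^(m+r) * (X:ℝ[X])^m * 1^(r-m) * ((r.choose m : ℕ):ℝ[X])).coeff k
      = if k = m then (-1:ℝ)^(m+r) * r.choose m else 0 := by
    intro m hm
    rw [term_eq m r (r.choose m) m, coeff_term]
  rw [Finset.sum_congr rfl h, Finset.sum_ite_eq (range (r+1)) k]
  simp [Nat.lt_succ_iff]

lemma key_id (lt r m : ℕ) :
    ∑ k ∈ range (r+1), (-1:ℝ)^k * (r.choose k) *
        ((∑ t ∈ range lt, (X:ℝ[X])^t)^r).coeff (m+k)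
      = (((X:ℝ[X])^lt - 1)^r).coeff (m + r) := by
  have hfact : (((X:ℝ[X])^lt - 1)^r) = (X - 1)^r * (∑ t ∈ range lt, (X:ℝ[X])^t)^r := by
    rw [← mul_pow, mul_comm, geom_sum_mul]
  rw [hfact, coeff_mul, Finset.Nat.sum_antidiagonal_eq_sum_range_succ_mk]
  have h1 : ∑ k ∈ range (m+r+1),
        ((X - 1 : ℝ[X])^r).coeff k * ((∑ t ∈ range lt, (X:ℝ[X])^t)^r).coeff (m+r-k)
      = ∑ k ∈ range (r+1),
        ((X - 1 : ℝ[X])^r).coeff k * ((∑ t ∈ range lt, (X:ℝ[X])^t)^r).coeff (m+r-k) := by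
    symm
    apply Finset.sum_subset (Finset.range_subset_range.2 (by omega))
    intro k hk hk'
    simp only [Finset.mem_range] at hk hk'
    rw [coeff_X_sub_one, if_neg (by omega)]
    ring
  rw [h1, ← Finset.sum_range_reflect]
  apply Finset.sum_congr rfl
  intro j hj
  simp only [Finset.mem_range, Nat.add_sub_cancel] at hj ⊢
  have hj' : j ≤ r := by omega
  rw [coeff_X_sub_one, if_pos hj', Nat.choose_symm hj']
  have h2 : m + (r - j) = m + r - j := by omega
  rw [h2]
  have h3 : (-1:ℝ)^(r - j) = (-1:ℝ)^(j + r) := by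
    have e1 : (-1:ℝ)^(r - j) * (-1:ℝ)^j = (-1:ℝ)^r := by
      rw [← pow_add, (by omega : r - j + j = r)]
    have e2 : (-1:ℝ)^(j+r) * (-1:ℝ)^j = (-1:ℝ)^r := by
      rw [← pow_add, (by omega : j + r + j = 2*j + r), pow_add, pow_mul]
      norm_num
    exact mul_right_cancel₀ (pow_ne_zero j (by norm_num : (-1:ℝ) ≠ 0)) (e1.trans e2.symm)
  rw [h3]

lemma natDeg_G_pow (lt r : ℕ) (hlt : 1 ≤ lt) :
    ((∑ t ∈ range lt, (X:ℝ[X])^t)^r).natDegree ≤ r * (lt - 1) := by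
  calc ((∑ t ∈ range lt, (X:ℝ[X])^t)^r).natDegree
      ≤ r * (∑ t ∈ range lt, (X:ℝ[X])^t).natDegree := natDegree_pow_le
    _ ≤ r * (lt - 1) := by
        apply Nat.mul_le_mul_left
        apply natDegree_sum_le_of_forall_le
        intro t ht
        simp only [Finset.mem_range] at ht
        rw [natDegree_X_pow]
        omega

lemma sum_coeff_eq (lt r lam : ℕ) (hr : 1 ≤ r) (hlt : 1 ≤ lt) (hlam : lam = r * lt - r + 1) :
    ∑ j ∈ range lam, ((∑ t ∈ range lt, (X:ℝ[X])^t)^r).coeff j = (lt:ℝ)^r := by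
  have hdeg : ((∑ t ∈ range lt, (X:ℝ[X])^t)^r).natDegree < lam := by
    have h := natDeg_G_pow lt r hlt
    have e : r * (lt - 1) = r * lt - r := by rw [Nat.mul_sub, mul_one]
    have e2 : r ≤ r * lt := Nat.le_mul_of_pos_right r (by omega)
    omega
  have heval : eval 1 ((∑ t ∈ range lt, (X:ℝ[X])^t)^r) = (lt:ℝ)^r := by
    rw [eval_pow, eval_finset_sum]
    simp
  rw [eval_eq_sum_range] at heval
  simp only [one_pow, mul_one] at heval
  rw [← heval]
  symm
  apply Finset.sum_subset (Finset.range_subset_range.2 (by omega))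
  · intro j hj hj'
    simp only [Finset.mem_range] at hj hj'
    rw [coeff_eq_zero_of_natDegree_lt (by omega)]

lemma nv_sq_ge (lt r lam : ℕ) (hr : 1 ≤ r) (hlt : 1 ≤ lt) (hlam : lam = r * lt - r + 1) :
    (lam:ℝ)^(2*r-1) ≤ (r:ℝ)^(2*r) * ∑ j ∈ range lam, (((∑ t ∈ range lt, (X:ℝ[X])^t)^r).coeff j)^2 := by
  set S2 := ∑ j ∈ range lam, (((∑ t ∈ range lt, (X:ℝ[X])^t)^r).coeff j)^2 with hS2
  have hlam1 : 1 ≤ lam := by omega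
  have h1 : ((lt:ℝ)^r)^2 ≤ lam * S2 := by
    have := sq_sum_le_card_mul_sum_sq (s := range lam)
      (f := fun j => ((∑ t ∈ range lt, (X:ℝ[X])^t)^r).coeff j)
    rw [sum_coeff_eq lt r lam hr hlt hlam] at this
    simpa using this
  have h2 : (lam:ℝ) ≤ (r:ℝ) * lt := by
    have e2 : r ≤ r * lt := Nat.le_mul_of_pos_right r (by omega)
    have : lam ≤ r * lt := by omega
    exact_mod_cast this
  have h3 : (lam:ℝ)^(2*r) ≤ ((r:ℝ) * lt)^(2*r) :=
    pow_le_pow_left₀ (by positivity) h2 _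
  have hlamR : (0:ℝ) < lam := by exact_mod_cast hlam1
  have key : (lam:ℝ)^(2*r-1) * lam ≤ ((r:ℝ)^(2*r) * S2) * lam := by
    calc (lam:ℝ)^(2*r-1) * lam = (lam:ℝ)^(2*r) := by
          rw [← pow_succ, (by omega : 2*r-1+1 = 2*r)]
      _ ≤ ((r:ℝ) * lt)^(2*r) := h3
      _ = (r:ℝ)^(2*r) * ((lt:ℝ)^r)^2 := by rw [mul_pow, ← pow_mul, mul_comm r 2, pow_mul]
      _ ≤ (r:ℝ)^(2*r) * (lam * S2) := by
          apply mul_le_mul_of_nonneg_left h1 (by positivity)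
      _ = ((r:ℝ)^(2*r) * S2) * lam := by ring
  exact le_of_mul_le_mul_right key hlamR

/-- signed binomial row function -/
noncomputable def fRow (r x y : ℕ) : ℝ :=
  ∑ k ∈ range (r+1), (-1:ℝ)^k * (r.choose k) * (if x = y + k then 1 else 0)

lemma fRow_eq_zero (r x y : ℕ) (h : x < y) : fRow r x y = 0 := by
  unfold fRow
  apply Finset.sum_eq_zero
  intro k hk
  rw [if_neg (by omega)]
  ring

lemma fRow_pascal (r x y : ℕ) : fRow (r+1) x y = fRow r x y - fRow r x (y+1) := by
  have h1 : ∀ k ∈ range (r+1), (-1:ℝ)^(k+1) * ((r+1).choose (k+1)) * (if x = y + (k+1) then 1 else 0)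
      = -((-1:ℝ)^k * (r.choose k) * (if x = (y+1) + k then 1 else 0))
        + (-1:ℝ)^(k+1) * (r.choose (k+1)) * (if x = y + (k+1) then 1 else 0) := by
    intro k hk
    rw [Nat.choose_succ_succ]
    push_cast
    have he : y + (k+1) = (y+1) + k := by omega
    rw [he]
    ring
  have h3 : ∑ k ∈ range (r+1), (-1:ℝ)^(k+1) * (r.choose (k+1)) * (if x = y + (k+1) then 1 else 0)
      = fRow r x y - (if x = y then 1 else 0) := by
    rw [Finset.sum_range_succ, Nat.choose_succ_self]
    simp only [Nat.cast_zero, mul_zero, zero_mul, add_zero]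
    unfold fRow
    rw [Finset.sum_range_succ']
    simp
  calc fRow (r+1) x y
      = (∑ k ∈ range (r+1), (-1:ℝ)^(k+1) * ((r+1).choose (k+1)) * (if x = y + (k+1) then 1 else 0))
        + (if x = y then 1 else 0) := by
        unfold fRow
        rw [Finset.sum_range_succ']
        simp only [pow_zero, Nat.choose_zero_right, Nat.cast_one, one_mul, mul_one, Nat.add_zero,
          add_zero]
    _ = (∑ k ∈ range (r+1), (-((-1:ℝ)^k * (r.choose k) * (if x = (y+1) + k then 1 else 0))
        + (-1:ℝ)^(k+1) * (r.choose (k+1)) * (if x = y + (k+1) then 1 else 0)))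
        + (if x = y then 1 else 0) := by
        rw [Finset.sum_congr rfl h1]
    _ = -fRow r x (y+1) + (fRow r x y - (if x = y then 1 else 0)) + (if x = y then 1 else 0) := by
        rw [Finset.sum_add_distrib, h3, Finset.sum_neg_distrib]
        rfl
    _ = fRow r x y - fRow r x (y+1) := by ring

noncomputable def Dmat (n : ℕ) : Matrix (Fin n) (Fin n) ℝ :=
  fun a b => if a = b then 1 else if (a : ℕ) = (b : ℕ) + 1 then -1 else 0

lemma Dmat_apply (n : ℕ) (a b : Fin n) :
    Dmat n a b = if a = b then 1 else if (a : ℕ) = (b : ℕ) + 1 then -1 else 0 := rfl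

lemma Dmat_pow (n r : ℕ) (a b : Fin n) : ((Dmat n)^r) a b = fRow r (a:ℕ) (b:ℕ) := by
  induction r generalizing b with
  | zero =>
    simp only [pow_zero, Matrix.one_apply, fRow, range_one, Finset.sum_singleton]
    simp [Fin.ext_iff]
  | succ r ih =>
    rw [pow_succ, Matrix.mul_apply]
    have hterm : ∀ j : Fin n, ((Dmat n)^r) a j * Dmat n j b
        = (if j = b then ((Dmat n)^r) a b else 0)
          + (if (j:ℕ) = (b:ℕ)+1 then -fRow r (a:ℕ) (j:ℕ) else 0) := by
      intro j
      rw [Dmat_apply]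
      by_cases h : j = b
      · subst h
        rw [if_pos rfl, if_pos rfl, if_neg (by omega)]
        ring
      · rw [if_neg h, if_neg h]
        by_cases h2 : (j:ℕ) = (b:ℕ)+1
        · rw [if_pos h2, if_pos h2, ih j]
          ring
        · rw [if_neg h2, if_neg h2]
          ring
    rw [Finset.sum_congr rfl (fun j _ => hterm j), Finset.sum_add_distrib]
    rw [Finset.sum_ite_eq' Finset.univ b (fun _ => ((Dmat n)^r) a b)]
    rw [if_pos (Finset.mem_univ b)]
    have h4 : ∑ j : Fin n, (if (j:ℕ) = (b:ℕ)+1 then -fRow r (a:ℕ) (j:ℕ) else 0)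
        = -fRow r (a:ℕ) ((b:ℕ)+1) := by
      rw [Fin.sum_univ_eq_sum_range (fun j => if j = (b:ℕ)+1 then -fRow r (a:ℕ) j else 0) n]
      rw [Finset.sum_ite_eq' (range n) ((b:ℕ)+1) (fun j => -fRow r (a:ℕ) j)]
      by_cases hbn : (b:ℕ)+1 ∈ range n
      · rw [if_pos hbn]
      · rw [if_neg hbn, fRow_eq_zero r (a:ℕ) ((b:ℕ)+1)
          (by simp only [Finset.mem_range] at hbn; have := a.isLt; omega), neg_zero]
    rw [h4, ih b, fRow_pascal]
    ring

noncomputable def Vrow (lt r lam i c : ℕ) : ℝ :=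
  if c / lam = i then ((∑ t ∈ range lt, (X:ℝ[X])^t)^r).coeff (c % lam) else 0

noncomputable def wRow (lt r lam i b : ℕ) : ℝ :=
  ∑ k ∈ range (r+1), (-1:ℝ)^k * (r.choose k) * Vrow lt r lam i (b + k)

lemma Vrow_eq_zero_of_ge (lt r lam p i x : ℕ) (hip : i < p) (hlam : 1 ≤ lam)
    (hx : lam * p ≤ x) : Vrow lt r lam i x = 0 := by
  unfold Vrow
  rw [if_neg]
  intro h
  have h1 : x < (i+1) * lam :=
    (Nat.div_lt_iff_lt_mul (by omega : 0 < lam)).1 (by omega : x / lam < i + 1)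
  have h2 : lam * (i+1) ≤ lam * p := Nat.mul_le_mul_left _ (by omega)
  have hc : (i+1) * lam = lam * i + lam := by ring
  have hm : lam * (i+1) = lam * i + lam := by ring
  omega

lemma wRow_l1 (lt r lam p i : ℕ) (hr : 1 ≤ r) (hlt : 1 ≤ lt)
    (hlam : lam = r * lt - r + 1) (hip : i < p) :
    ∑ b ∈ range (lam * p), |wRow lt r lam i b| ≤ ((r:ℝ)+1) * 2^(3*r) := by
  have hlam1 : 1 ≤ lam := by omega
  have hdeg : ((∑ t ∈ range lt, (X:ℝ[X])^t)^r).natDegree < lam := by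
    have h := natDeg_G_pow lt r hlt
    have e : r * (lt - 1) = r * lt - r := by rw [Nat.mul_sub, mul_one]
    have e2 : r ≤ r * lt := Nat.le_mul_of_pos_right r (by omega)
    omega
  -- value of wRow in the "interior" region b ≥ lam * i
  have hInt : ∀ b : ℕ, lam * i ≤ b →
      wRow lt r lam i b = (((X:ℝ[X])^lt - 1)^r).coeff ((b - lam * i) + r) := by
    intro b hb
    rw [← key_id lt r (b - lam * i)]
    unfold wRow
    apply Finset.sum_congr rfl
    intro k hk
    congr 1
    unfold Vrow
    by_cases h : (b + k) / lam = i
    · rw [if_pos h]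
      congr 1
      have h1 : lam * i ≤ b + k := by
        have := Nat.mul_div_le (b + k) lam
        rw [h] at this
        omega
      have h2 := Nat.mod_add_div (b + k) lam
      rw [h] at h2
      omega
    · rw [if_neg h]
      have h1 : (b + k) / lam ≥ i := Nat.le_div_iff_mul_le (by omega) |>.2 (by rw [Nat.mul_comm]; omega)
      have h2 : (b + k) / lam ≥ i + 1 := by omega
      have h3 : lam * (i + 1) ≤ b + k := by
        have h4 := Nat.le_div_iff_mul_le (k := lam) (by omega) |>.1 h2
        have h5 : (i+1) * lam = lam * (i+1) := by ring
        omega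
      symm
      apply coeff_eq_zero_of_natDegree_lt
      have h6 : lam * (i+1) = lam * i + lam := by ring
      omega
  -- wRow vanishes well below the block
  have hLow : ∀ b : ℕ, b + r < lam * i → wRow lt r lam i b = 0 := by
    intro b hb
    unfold wRow
    apply Finset.sum_eq_zero
    intro k hk
    simp only [Finset.mem_range] at hk
    unfold Vrow
    rw [if_neg, mul_zero]
    intro h
    have h1 : lam * i ≤ b + k := by
      have := Nat.mul_div_le (b + k) lam
      rw [h] at this
      omega
    omega
  -- bound on |wRow| in the boundary region
  have hVb : ∀ x : ℕ, x < lam * i + r → |Vrow lt r lam i x| ≤ 2^(2*r) := by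
    intro x hx
    unfold Vrow
    split
    · next h =>
      have h1 : lam * i ≤ x := by
        have := Nat.mul_div_le x lam
        rw [h] at this
        omega
      have h2 : x % lam = x - lam * i := by
        have h3 := Nat.mod_add_div x lam
        rw [h] at h3
        omega
      have h4 : x % lam + r ≤ 2*r := by omega
      rw [abs_of_nonneg (coeff_G_pow lt r (x % lam)).1]
      calc ((∑ t ∈ range lt, (X:ℝ[X])^t)^r).coeff (x % lam) ≤ 2^(x % lam + r) :=
            (coeff_G_pow lt r (x % lam)).2
        _ ≤ 2^(2*r) := pow_le_pow_right₀ (by norm_num) h4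
    · simp
  have hBd : ∀ b : ℕ, b < lam * i → |wRow lt r lam i b| ≤ 2^(3*r) := by
    intro b hb
    unfold wRow
    calc |∑ k ∈ range (r+1), (-1:ℝ)^k * (r.choose k) * Vrow lt r lam i (b + k)|
        ≤ ∑ k ∈ range (r+1), |(-1:ℝ)^k * (r.choose k) * Vrow lt r lam i (b + k)| :=
          Finset.abs_sum_le_sum_abs _ _
      _ ≤ ∑ k ∈ range (r+1), (r.choose k : ℝ) * 2^(2*r) := by
          apply Finset.sum_le_sum
          intro k hk
          simp only [Finset.mem_range] at hk
          rw [abs_mul, abs_mul, abs_pow, abs_neg, abs_one, one_pow, one_mul, Nat.abs_cast]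
          exact mul_le_mul_of_nonneg_left (hVb (b+k) (by omega)) (by positivity)
      _ = (∑ k ∈ range (r+1), (r.choose k : ℝ)) * 2^(2*r) := by rw [Finset.sum_mul]
      _ = 2^r * 2^(2*r) := by
          rw [← Nat.cast_sum, Nat.sum_range_choose]
          norm_num
      _ = 2^(3*r) := by rw [← pow_add]; congr 1; omega
  -- split the sum
  have hile : lam * i ≤ lam * p := Nat.mul_le_mul_left _ (by omega)
  rw [Finset.range_eq_Ico, ← Finset.sum_Ico_consecutive _ (Nat.zero_le (lam*i)) hile]
  -- interior part
  have hA : ∑ b ∈ Ico (lam*i) (lam*p), |wRow lt r lam i b| ≤ 2^r := by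
    rw [Finset.sum_Ico_eq_sum_range]
    calc ∑ k ∈ range (lam*p - lam*i), |wRow lt r lam i (lam*i + k)|
        = ∑ k ∈ range (lam*p - lam*i), |(((X:ℝ[X])^lt - 1)^r).coeff (k + r)| := by
          apply Finset.sum_congr rfl
          intro k hk
          rw [hInt (lam*i + k) (by omega)]
          congr 2
          omega
      _ ≤ ∑ n' ∈ range (lam*p - lam*i + r), |(((X:ℝ[X])^lt - 1)^r).coeff n'| := by
          rw [show ∑ k ∈ range (lam*p - lam*i), |(((X:ℝ[X])^lt - 1)^r).coeff (k + r)|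
              = ∑ n' ∈ Ico r (lam*p - lam*i + r), |(((X:ℝ[X])^lt - 1)^r).coeff n'| by
            rw [Finset.sum_Ico_eq_sum_range]
            simp only [Nat.add_sub_cancel]
            apply Finset.sum_congr rfl
            intro k hk
            rw [Nat.add_comm r k]]
          apply Finset.sum_le_sum_of_subset_of_nonneg
          · intro x hx
            simp only [Finset.mem_Ico, Finset.mem_range] at *
            omega
          · intro b _ _
            positivity
      _ ≤ 2^r := l1_Q lt r _
  -- boundary part
  have hB : ∑ b ∈ Ico 0 (lam*i), |wRow lt r lam i b| ≤ (r:ℝ) * 2^(3*r) := by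
    rw [← Finset.sum_Ico_consecutive _ (Nat.zero_le (lam*i - r)) (by omega : lam*i - r ≤ lam*i)]
    have hB1 : ∑ b ∈ Ico 0 (lam*i - r), |wRow lt r lam i b| = 0 := by
      apply Finset.sum_eq_zero
      intro b hb
      simp only [Finset.mem_Ico] at hb
      rw [hLow b (by omega), abs_zero]
    rw [hB1, zero_add]
    calc ∑ b ∈ Ico (lam*i - r) (lam*i), |wRow lt r lam i b|
        ≤ ∑ b ∈ Ico (lam*i - r) (lam*i), (2:ℝ)^(3*r) := by
          apply Finset.sum_le_sum
          intro b hb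
          simp only [Finset.mem_Ico] at hb
          exact hBd b (by omega)
      _ = ((lam*i - (lam*i - r) : ℕ) : ℝ) * 2^(3*r) := by
          rw [Finset.sum_const, Nat.card_Ico, nsmul_eq_mul]
      _ ≤ (r:ℝ) * 2^(3*r) := by
          apply mul_le_mul_of_nonneg_right _ (by positivity)
          exact_mod_cast Nat.cast_le.2 (by omega : lam*i - (lam*i - r) ≤ r)
  calc ∑ b ∈ Ico 0 (lam*i), |wRow lt r lam i b| + ∑ b ∈ Ico (lam*i) (lam*p), |wRow lt r lam i b|
      ≤ (r:ℝ) * 2^(3*r) + 2^r := by gcongr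
    _ ≤ ((r:ℝ)+1) * 2^(3*r) := by
        have : (2:ℝ)^r ≤ 2^(3*r) := pow_le_pow_right₀ (by norm_num) (by omega)
        nlinarith [this]

end SDAux

namespace SDAux

lemma main_aux (r : ℕ) (hr : 1 ≤ r) (p lt lam : ℕ) (hp : 0 < p) (hlt : 1 ≤ lt)
    (hlam : lam = r * lt - r + 1) (C : ℝ) (ux uy : Fin (lam * p) → ℝ)
    (hux : ∀ c, |ux c| ≤ C) (huy : ∀ c, |uy c| ≤ C) :
    |∑ i : Fin p,
        (∑ c : Fin (lam * p),
          (Real.sqrt 2 / (Real.sqrt p * Real.sqrt (∑ j ∈ range lam,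
              (((∑ t ∈ range lt, (X:ℝ[X])^t)^r).coeff j)^2)) * Vrow lt r lam (i:ℕ) (c:ℕ))
            * (Dmat (lam*p) ^ r).mulVec ux c) *
        (∑ c : Fin (lam * p),
          (Real.sqrt 2 / (Real.sqrt p * Real.sqrt (∑ j ∈ range lam,
              (((∑ t ∈ range lt, (X:ℝ[X])^t)^r).coeff j)^2)) * Vrow lt r lam (i:ℕ) (c:ℕ))
            * (Dmat (lam*p) ^ r).mulVec uy c)|
      ≤ C^2 * (2 * (((r:ℝ)+1) * 2^(3*r))^2 * (r:ℝ)^(2*r)) / (lam:ℝ)^(2*r-1) := by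
  have hlam1 : 1 ≤ lam := by omega
  have hn : 0 < lam * p := Nat.mul_pos (by omega) hp
  have hC : 0 ≤ C := le_trans (abs_nonneg _) (hux ⟨0, hn⟩)
  set S2 : ℝ := ∑ j ∈ range lam, (((∑ t ∈ range lt, (X:ℝ[X])^t)^r).coeff j)^2 with hS2def
  set g : ℝ := ((r:ℝ)+1) * 2^(3*r) with hgdef
  set scal : ℝ := Real.sqrt 2 / (Real.sqrt p * Real.sqrt S2) with hscaldef
  have hS2nonneg : 0 ≤ S2 := Finset.sum_nonneg fun j _ => sq_nonneg _
  have hnv := nv_sq_ge lt r lam hr hlt hlam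
  have hrpow : (0:ℝ) < (r:ℝ)^(2*r) := by positivity
  have hlampow : (0:ℝ) < (lam:ℝ)^(2*r-1) := by positivity
  have h1le : (1:ℝ) ≤ (lam:ℝ)^(2*r-1) :=
    one_le_pow₀ (by exact_mod_cast hlam1)
  have hS2pos : 0 < S2 := by nlinarith [hnv, h1le, hrpow]
  have hppos : (0:ℝ) < p := by exact_mod_cast hp
  have hscal : 0 ≤ scal := by positivity
  have hscal2 : scal^2 = 2 / ((p:ℝ) * S2) := by
    rw [hscaldef, div_pow, mul_pow, Real.sq_sqrt (by norm_num : (0:ℝ) ≤ 2),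
      Real.sq_sqrt hppos.le, Real.sq_sqrt hS2nonneg]
  have hgpos : 0 < g := by positivity
  -- inner sum identity
  have hinner : ∀ (i b : ℕ), i < p →
      (∑ c : Fin (lam*p), Vrow lt r lam i (c:ℕ) * fRow r (c:ℕ) b) = wRow lt r lam i b := by
    intro i b hip
    rw [Fin.sum_univ_eq_sum_range (fun c => Vrow lt r lam i c * fRow r c b) (lam*p)]
    unfold fRow
    calc ∑ c ∈ range (lam*p), Vrow lt r lam i c *
            ∑ k ∈ range (r+1), (-1:ℝ)^k * (r.choose k) * (if c = b + k then 1 else 0)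
        = ∑ c ∈ range (lam*p), ∑ k ∈ range (r+1),
            (if c = b + k then (-1:ℝ)^k * (r.choose k) * Vrow lt r lam i c else 0) := by
          apply Finset.sum_congr rfl
          intro c _
          rw [Finset.mul_sum]
          apply Finset.sum_congr rfl
          intro k _
          by_cases h : c = b + k
          · rw [if_pos h, if_pos h]; ring
          · rw [if_neg h, if_neg h]; ring
      _ = ∑ k ∈ range (r+1), ∑ c ∈ range (lam*p),
            (if c = b + k then (-1:ℝ)^k * (r.choose k) * Vrow lt r lam i c else 0) :=
          Finset.sum_comm
      _ = ∑ k ∈ range (r+1), (-1:ℝ)^k * (r.choose k) * Vrow lt r lam i (b+k) := by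
          apply Finset.sum_congr rfl
          intro k _
          rw [Finset.sum_ite_eq' (range (lam*p)) (b+k)
            (fun c => (-1:ℝ)^k * (r.choose k) * Vrow lt r lam i c)]
          by_cases h : b + k ∈ range (lam*p)
          · rw [if_pos h]
          · rw [if_neg h, Vrow_eq_zero_of_ge lt r lam p i (b+k) hip hlam1
              (by simp only [Finset.mem_range] at h; omega), mul_zero]
      _ = wRow lt r lam i b := rfl
  have hstep1 : ∀ (i : Fin p) (u : Fin (lam*p) → ℝ),
      (∑ c : Fin (lam*p), Vrow lt r lam (i:ℕ) (c:ℕ) * (Dmat (lam*p) ^ r).mulVec u c)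
        = ∑ b : Fin (lam*p), wRow lt r lam (i:ℕ) (b:ℕ) * u b := by
    intro i u
    have hmv : ∀ c : Fin (lam*p), (Dmat (lam*p) ^ r).mulVec u c
        = ∑ b : Fin (lam*p), fRow r (c:ℕ) (b:ℕ) * u b := by
      intro c
      simp only [Matrix.mulVec, dotProduct, Dmat_pow]
    calc ∑ c : Fin (lam*p), Vrow lt r lam (i:ℕ) (c:ℕ) * (Dmat (lam*p) ^ r).mulVec u c
        = ∑ c : Fin (lam*p), ∑ b : Fin (lam*p),
            Vrow lt r lam (i:ℕ) (c:ℕ) * (fRow r (c:ℕ) (b:ℕ) * u b) := by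
          apply Finset.sum_congr rfl
          intro c _
          rw [hmv c, Finset.mul_sum]
      _ = ∑ b : Fin (lam*p), ∑ c : Fin (lam*p),
            Vrow lt r lam (i:ℕ) (c:ℕ) * (fRow r (c:ℕ) (b:ℕ) * u b) := Finset.sum_comm
      _ = ∑ b : Fin (lam*p), wRow lt r lam (i:ℕ) (b:ℕ) * u b := by
          apply Finset.sum_congr rfl
          intro b _
          have h2 : ∑ c : Fin (lam*p), Vrow lt r lam (i:ℕ) (c:ℕ) * (fRow r (c:ℕ) (b:ℕ) * u b)
              = (∑ c : Fin (lam*p), Vrow lt r lam (i:ℕ) (c:ℕ) * fRow r (c:ℕ) (b:ℕ)) * u b := by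
            rw [Finset.sum_mul]
            exact Finset.sum_congr rfl fun c _ => by ring
          rw [h2, hinner (i:ℕ) (b:ℕ) i.isLt]
  have hstep2 : ∀ (i : Fin p) (u : Fin (lam*p) → ℝ), (∀ c, |u c| ≤ C) →
      |∑ b : Fin (lam*p), wRow lt r lam (i:ℕ) (b:ℕ) * u b| ≤ C * g := by
    intro i u hu
    calc |∑ b : Fin (lam*p), wRow lt r lam (i:ℕ) (b:ℕ) * u b|
        ≤ ∑ b : Fin (lam*p), |wRow lt r lam (i:ℕ) (b:ℕ) * u b| :=
          Finset.abs_sum_le_sum_abs _ _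
      _ ≤ ∑ b : Fin (lam*p), |wRow lt r lam (i:ℕ) (b:ℕ)| * C := by
          apply Finset.sum_le_sum
          intro b _
          rw [abs_mul]
          exact mul_le_mul_of_nonneg_left (hu b) (abs_nonneg _)
      _ = (∑ b ∈ range (lam*p), |wRow lt r lam (i:ℕ) b|) * C := by
          rw [← Finset.sum_mul,
            Fin.sum_univ_eq_sum_range (fun b => |wRow lt r lam (i:ℕ) b|) (lam*p)]
      _ ≤ g * C := mul_le_mul_of_nonneg_right
          (wRow_l1 lt r lam p (i:ℕ) hr hlt hlam i.isLt) hC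
      _ = C * g := mul_comm _ _
  have hA : ∀ (i : Fin p) (u : Fin (lam*p) → ℝ), (∀ c, |u c| ≤ C) →
      |∑ c : Fin (lam*p), (scal * Vrow lt r lam (i:ℕ) (c:ℕ)) * (Dmat (lam*p) ^ r).mulVec u c|
        ≤ scal * (C * g) := by
    intro i u hu
    have he : ∑ c : Fin (lam*p), (scal * Vrow lt r lam (i:ℕ) (c:ℕ)) * (Dmat (lam*p) ^ r).mulVec u c
        = scal * ∑ c : Fin (lam*p), Vrow lt r lam (i:ℕ) (c:ℕ) * (Dmat (lam*p) ^ r).mulVec u c := by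
      rw [Finset.mul_sum]
      apply Finset.sum_congr rfl
      intro c _
      ring
    rw [he, abs_mul, abs_of_nonneg hscal, hstep1 i u]
    exact mul_le_mul_of_nonneg_left (hstep2 i u hu) hscal
  calc |∑ i : Fin p,
        (∑ c : Fin (lam*p), (scal * Vrow lt r lam (i:ℕ) (c:ℕ)) * (Dmat (lam*p) ^ r).mulVec ux c) *
        (∑ c : Fin (lam*p), (scal * Vrow lt r lam (i:ℕ) (c:ℕ)) * (Dmat (lam*p) ^ r).mulVec uy c)|
      ≤ ∑ i : Fin p,
        |(∑ c : Fin (lam*p), (scal * Vrow lt r lam (i:ℕ) (c:ℕ)) * (Dmat (lam*p) ^ r).mulVec ux c) *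
         (∑ c : Fin (lam*p), (scal * Vrow lt r lam (i:ℕ) (c:ℕ)) * (Dmat (lam*p) ^ r).mulVec uy c)| :=
        Finset.abs_sum_le_sum_abs _ _
    _ ≤ ∑ _i : Fin p, (scal * (C * g)) * (scal * (C * g)) := by
        apply Finset.sum_le_sum
        intro i _
        rw [abs_mul]
        exact mul_le_mul (hA i ux hux) (hA i uy huy) (abs_nonneg _) (by positivity)
    _ = (p:ℝ) * ((scal * (C * g)) * (scal * (C * g))) := by
        rw [Finset.sum_const, Finset.card_univ, Fintype.card_fin, nsmul_eq_mul]
    _ = ((p:ℝ) * scal^2) * (C * g)^2 := by ring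
    _ = (2 / S2) * (C * g)^2 := by
        rw [hscal2]
        field_simp
    _ ≤ C^2 * (2 * g^2 * (r:ℝ)^(2*r)) / (lam:ℝ)^(2*r-1) := by
        rw [div_mul_eq_mul_div, div_le_div_iff₀ hS2pos hlampow]
        calc 2 * (C * g)^2 * (lam:ℝ)^(2*r-1)
            ≤ 2 * (C * g)^2 * ((r:ℝ)^(2*r) * S2) :=
              mul_le_mul_of_nonneg_left hnv (by positivity)
          _ = C^2 * (2 * g^2 * (r:ℝ)^(2*r)) * S2 := by ring

end SDAux

/-- Bound on the quantization-noise cross term for the r-th order Sigma-Delta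
condensation operator: there is a constant `c'(r)` depending only on `r` such that
`|⟨Ṽ_{ΣΔ} D^r u_x, Ṽ_{ΣΔ} D^r u_y⟩| ≤ c(K,r)² c'(r)/λ^{2r−1}`. -/
theorem stmt_9 (r : ℕ) (hr : 1 ≤ r) :
    ∃ c' : ℝ, 0 < c' ∧
      ∀ (p lt lam : ℕ), 0 < p → 1 ≤ lt → lam = r * lt - r + 1 →
      ∀ (C : ℝ) (ux uy : Fin (lam * p) → ℝ),
        (∀ c, |ux c| ≤ C) → (∀ c, |uy c| ≤ C) →
        -- v = coefficient vector of (1 + X + … + X^{λ̃−1})^r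
        (let v : ℕ → ℝ := fun j => ((∑ t ∈ Finset.range lt, (X : ℝ[X]) ^ t) ^ r).coeff j
         -- V_{ΣΔ} = I_p ⊗ v
         let V : Fin p → Fin (lam * p) → ℝ :=
           fun i c => if (c : ℕ) / lam = (i : ℕ) then v ((c : ℕ) % lam) else 0
         -- first-order difference matrix D
         let D : Matrix (Fin (lam * p)) (Fin (lam * p)) ℝ :=
           fun a b => if a = b then 1 else if (a : ℕ) = (b : ℕ) + 1 then -1 else 0
         let nv : ℝ := Real.sqrt (∑ j ∈ Finset.range lam, (v j) ^ 2)
         -- Ṽ_{ΣΔ} = (√2/(√p ‖v‖₂)) V_{ΣΔ}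
         let Vt : Fin p → Fin (lam * p) → ℝ :=
           fun i c => (Real.sqrt 2 / (Real.sqrt p * nv)) * V i c
         |∑ i : Fin p, (∑ c, Vt i c * (D ^ r).mulVec ux c) * (∑ c, Vt i c * (D ^ r).mulVec uy c)|)
          ≤ C ^ 2 * c' / (lam : ℝ) ^ (2 * r - 1) := by
  refine ⟨2 * (((r:ℝ)+1) * 2^(3*r))^2 * (r:ℝ)^(2*r), by
    have : (1:ℝ) ≤ (r:ℝ) := by exact_mod_cast hr
    positivity, ?_⟩
  intro p lt lam hp hlt hlam C ux uy hux huy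
  exact SDAux.main_aux r hr p lt lam hp hlt hlam C ux uy hux huy
end
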